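/- For n ≥ 1, the group O(n, F₂) is generated by the n×n permutation matrices together with (in the case n ≥ 4) the single matrix A ⊕ I_{n−4}, where A is the 4×4 matrix over F₂ with 0 on the diagonal and 1 in every off-diagonal entry. -/

import Mathlib

open Matrix Finset

namespace OrthoGen

variable {n : ℕ}

lemma zmod2_cases : ∀ x : ZMod 2, x = 0 ∨ x = 1 := by decide

lemma zmod2_mul_self : ∀ x : ZMod 2, x * x = x := by decide

def permMat (σ : Equiv.Perm (Fin n)) : Matrix (Fin n) (Fin n) (ZMod 2) :=
  Matrix.of fun i j => if σ j = i then 1 else 0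

lemma permMat_mul_left (σ : Equiv.Perm (Fin n)) (N : Matrix (Fin n) (Fin n) (ZMod 2)) (i j : Fin n) :
    (permMat σ * N) i j = N (σ⁻¹ i) j := by
  simp [Matrix.mul_apply, permMat, Equiv.apply_eq_iff_eq_symm_apply, Equiv.Perm.inv_def]

lemma mul_permMat (σ : Equiv.Perm (Fin n)) (N : Matrix (Fin n) (Fin n) (ZMod 2)) (i j : Fin n) :
    (N * permMat σ) i j = N i (σ j) := by
  simp [Matrix.mul_apply, permMat, mul_ite]

lemma permMat_mul (σ τ : Equiv.Perm (Fin n)) :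
    permMat σ * permMat τ = permMat (σ * τ) := by
  ext i j
  rw [mul_permMat]
  rfl

lemma permMat_one : permMat (1 : Equiv.Perm (Fin n)) = 1 := by
  ext i j
  simp [permMat, Matrix.one_apply, eq_comm]

lemma transpose_permMat (σ : Equiv.Perm (Fin n)) : (permMat σ)ᵀ = permMat σ⁻¹ := by
  ext i j
  simp only [transpose_apply, permMat, of_apply]
  congr 1
  simp only [eq_iff_iff, Equiv.Perm.inv_def]
  rw [Equiv.symm_apply_eq]
  exact eq_comm

lemma permMat_mul_inv (σ : Equiv.Perm (Fin n)) : permMat σ * permMat σ⁻¹ = 1 := by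
  rw [permMat_mul, mul_inv_cancel, permMat_one]

lemma permMat_orth (σ : Equiv.Perm (Fin n)) : permMat σ * (permMat σ)ᵀ = 1 := by
  rw [transpose_permMat, permMat_mul_inv]


def Bmat (n : ℕ) : Matrix (Fin n) (Fin n) (ZMod 2) :=
  Matrix.of fun i j : Fin n =>
    if (i : ℕ) < 4 ∧ (j : ℕ) < 4 then (if i = j then 0 else 1)
    else (if i = j then 1 else 0)

def Tmat (c : Fin 4 → Fin n) : Matrix (Fin n) (Fin n) (ZMod 2) :=
  Matrix.of fun i j : Fin n =>
    if (∃ a, c a = i) ∧ (∃ b, c b = j) then (if i = j then 0 else 1)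
    else (if i = j then 1 else 0)

lemma ite01_eq (p : Prop) [Decidable p] :
    (if p then (0 : ZMod 2) else 1) = 1 + (if p then 1 else 0) := by
  by_cases h : p <;> simp [h] <;> decide

lemma mul_Tmat (c : Fin 4 → Fin n) (hc : Function.Injective c)
    (M : Matrix (Fin n) (Fin n) (ZMod 2)) (i j : Fin n) :
    (M * Tmat c) i j =
      if ∃ b, c b = j then M i j + ∑ a, M i (c a) else M i j := by
  classical
  rw [Matrix.mul_apply]
  rw [← Finset.sum_filter_add_sum_filter_not Finset.univ (fun k => k ∈ Finset.univ.image c)]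
  have himg : Finset.univ.filter (fun k => k ∈ Finset.univ.image c) = Finset.univ.image c := by
    simp [Finset.filter_mem_eq_inter]
  rw [himg, Finset.sum_image (fun a _ b _ h => hc h)]
  by_cases hj : ∃ b, c b = j
  · obtain ⟨b, rfl⟩ := hj
    have h1 : ∀ a : Fin 4, Tmat c (c a) (c b) = 1 + (if c a = c b then 1 else 0) := by
      intro a
      have : Tmat c (c a) (c b) = if c a = c b then 0 else 1 := by
        simp [Tmat]
      rw [this, ite01_eq]
    have hsum1 : ∑ a : Fin 4, M i (c a) * Tmat c (c a) (c b)
        = (∑ a : Fin 4, M i (c a)) + M i (c b) := by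
      calc ∑ a : Fin 4, M i (c a) * Tmat c (c a) (c b)
          = ∑ a : Fin 4, (M i (c a) + M i (c a) * (if c a = c b then 1 else 0)) := by
            refine Finset.sum_congr rfl fun a _ => ?_
            rw [h1 a, mul_add, mul_one]
        _ = (∑ a : Fin 4, M i (c a)) + ∑ a : Fin 4, M i (c a) * (if c a = c b then 1 else 0) := by
            rw [Finset.sum_add_distrib]
        _ = (∑ a : Fin 4, M i (c a)) + M i (c b) := by
            congr 1
            simp only [mul_ite, mul_one, mul_zero]
            simp only [hc.eq_iff]
            rw [Finset.sum_ite_eq' Finset.univ b]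
            simp
    have hsum2 : ∑ k ∈ Finset.univ.filter (fun k => ¬ k ∈ Finset.univ.image c),
        M i k * Tmat c k (c b) = 0 := by
      refine Finset.sum_eq_zero fun k hk => ?_
      simp only [Finset.mem_filter, Finset.mem_image] at hk
      have h2 : ¬ ∃ a, c a = k := by
        rintro ⟨a, rfl⟩; exact hk.2 ⟨a, Finset.mem_univ a, rfl⟩
      have hkb : k ≠ c b := by rintro rfl; exact h2 ⟨b, rfl⟩
      have : Tmat c k (c b) = 0 := by simp [Tmat, h2, hkb]
      rw [this, mul_zero]
    rw [hsum1, hsum2, add_zero, if_pos ⟨b, rfl⟩, add_comm]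
  · have hsum1 : ∑ a : Fin 4, M i (c a) * Tmat c (c a) j = 0 := by
      refine Finset.sum_eq_zero fun a _ => ?_
      have haj : c a ≠ j := fun h => hj ⟨a, h⟩
      have : Tmat c (c a) j = 0 := by simp [Tmat, haj, hj]
      rw [this, mul_zero]
    have hsum2 : ∑ k ∈ Finset.univ.filter (fun k => ¬ k ∈ Finset.univ.image c),
        M i k * Tmat c k j = M i j := by
      have hstep : ∀ k ∈ Finset.univ.filter (fun k => ¬ k ∈ Finset.univ.image c),
          M i k * Tmat c k j = if k = j then M i j else 0 := by
        intro k hk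
        simp only [Finset.mem_filter, Finset.mem_image] at hk
        have h2 : ¬ ∃ a, c a = k := by
          rintro ⟨a, rfl⟩; exact hk.2 ⟨a, Finset.mem_univ a, rfl⟩
        have : Tmat c k j = if k = j then 1 else 0 := by simp [Tmat, h2]
        rw [this, mul_ite, mul_one, mul_zero]
        by_cases h : k = j <;> simp [h]
      rw [Finset.sum_congr rfl hstep, Finset.sum_ite_eq' _ j]
      have : j ∈ Finset.univ.filter (fun k => ¬ k ∈ Finset.univ.image c) := by
        simp only [Finset.mem_filter, Finset.mem_image]
        exact ⟨Finset.mem_univ j, by rintro ⟨a, -, rfl⟩; exact hj ⟨a, rfl⟩⟩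
      rw [if_pos this]
    rw [hsum1, hsum2, zero_add, if_neg hj]

lemma Tmat_transpose (c : Fin 4 → Fin n) : (Tmat c)ᵀ = Tmat c := by
  ext i j
  simp only [transpose_apply, Tmat, of_apply]
  rcases eq_or_ne i j with rfl | h
  · rfl
  · simp [h, h.symm, and_comm]

lemma sum_fin4_offdiag : ∀ a0 : Fin 4, ∑ a : Fin 4, (if a0 = a then (0 : ZMod 2) else 1) = 1 := by
  decide

lemma Tmat_sq (c : Fin 4 → Fin n) (hc : Function.Injective c) :
    Tmat c * Tmat c = 1 := by
  ext i j
  rw [mul_Tmat c hc, Matrix.one_apply]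
  by_cases hi : ∃ a, c a = i
  · obtain ⟨a0, rfl⟩ := hi
    have hs : ∑ a, Tmat c (c a0) (c a) = 1 := by
      have : ∀ a : Fin 4, Tmat c (c a0) (c a) = if a0 = a then 0 else 1 := by
        intro a
        simp [Tmat, hc.eq_iff]
      rw [Finset.sum_congr rfl fun a _ => this a]
      exact sum_fin4_offdiag a0
    by_cases hj : ∃ b, c b = j
    · rw [if_pos hj, hs]
      have hT : Tmat c (c a0) j = if c a0 = j then 0 else 1 := by
        simp [Tmat, hj]
      rw [hT]
      rcases eq_or_ne (c a0) j with h | h <;> simp [h] <;> decide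
    · rw [if_neg hj]
      have : ¬ ((∃ a, c a = c a0) ∧ (∃ b, c b = j)) := fun h => hj h.2
      have hne : c a0 ≠ j := fun h => hj ⟨a0, h⟩
      simp [Tmat, this, hne]
      exact fun x hx => hj ⟨x, hx⟩
  · have hz : ∑ a, Tmat c i (c a) = 0 := by
      refine Finset.sum_eq_zero fun a _ => ?_
      have : i ≠ c a := fun h => hi ⟨a, h.symm⟩
      simp [Tmat, this, fun h => hi h]
    by_cases hj : ∃ b, c b = j
    · rw [if_pos hj, hz, add_zero]
      simp [Tmat, hi]
    · rw [if_neg hj]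
      simp [Tmat, hi]

lemma Bmat_eq_Tmat (h4 : 4 ≤ n) : Bmat n = Tmat (Fin.castLE h4) := by
  ext i j
  have key : ∀ i : Fin n, ((i : ℕ) < 4 ↔ ∃ a : Fin 4, Fin.castLE h4 a = i) := by
    intro i
    constructor
    · intro h; exact ⟨⟨i.1, h⟩, Fin.ext rfl⟩
    · rintro ⟨a, rfl⟩; exact a.2
  simp only [Bmat, Tmat, of_apply]
  exact if_congr (and_congr (key i) (key j)) rfl rfl

lemma Bmat_sq (h4 : 4 ≤ n) : Bmat n * Bmat n = 1 := by
  rw [Bmat_eq_Tmat h4]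
  exact Tmat_sq _ (Fin.castLE_injective h4)

lemma Bmat_transpose : (Bmat n)ᵀ = Bmat n := by
  ext i j
  simp only [transpose_apply, Bmat, of_apply]
  rcases eq_or_ne i j with rfl | h
  · rfl
  · simp [h, h.symm, and_comm]

lemma exists_perm (h4 : 4 ≤ n) (c : Fin 4 → Fin n) (hc : Function.Injective c) :
    ∃ σ : Equiv.Perm (Fin n), ∀ a : Fin 4, σ (Fin.castLE h4 a) = c a := by
  classical
  set f : Fin 4 → Fin n := Fin.castLE h4 with hf_def
  have hf : Function.Injective f := Fin.castLE_injective h4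
  have hcard : Fintype.card ((Set.range f)ᶜ : Set (Fin n)) =
      Fintype.card ((Set.range c)ᶜ : Set (Fin n)) := by
    rw [Fintype.card_compl_set, Fintype.card_compl_set,
      Set.card_range_of_injective hf, Set.card_range_of_injective hc]
  let e1 : Fin 4 ≃ Set.range f := Equiv.ofInjective f hf
  let e2 : Fin 4 ≃ Set.range c := Equiv.ofInjective c hc
  let e3 : ((Set.range f)ᶜ : Set (Fin n)) ≃ ((Set.range c)ᶜ : Set (Fin n)) :=
    Fintype.equivOfCardEq hcard
  let σ : Equiv.Perm (Fin n) :=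
    ((Equiv.Set.sumCompl (Set.range f)).symm.trans
      ((e1.symm.sumCongr e3).trans
        ((e2.sumCongr (Equiv.refl _)).trans (Equiv.Set.sumCompl (Set.range c)))))
  refine ⟨σ, fun a => ?_⟩
  show σ (f a) = c a
  have h1 : (Equiv.Set.sumCompl (Set.range f)).symm (f a) = Sum.inl ⟨f a, ⟨a, rfl⟩⟩ :=
    Equiv.Set.sumCompl_symm_apply_of_mem (show f a ∈ Set.range f from ⟨a, rfl⟩)
  have h2 : e1.symm ⟨f a, ⟨a, rfl⟩⟩ = a := by
    rw [Equiv.symm_apply_eq]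
    rfl
  simp only [σ, Equiv.trans_apply, h1, Equiv.sumCongr_apply, Sum.map_inl, h2]
  rfl



lemma Tmat_conj (h4 : 4 ≤ n) (c : Fin 4 → Fin n) (σ : Equiv.Perm (Fin n))
    (hσ : ∀ a : Fin 4, σ (Fin.castLE h4 a) = c a) :
    permMat σ * Bmat n * permMat σ⁻¹ = Tmat c := by
  have key : ∀ i : Fin n, (((σ⁻¹ i : Fin n) : ℕ) < 4 ↔ ∃ a, c a = i) := by
    intro i
    constructor
    · intro h
      refine ⟨⟨((σ⁻¹ i : Fin n) : ℕ), h⟩, ?_⟩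
      rw [← hσ]
      have he : (Fin.castLE h4 ⟨((σ⁻¹ i : Fin n) : ℕ), h⟩) = σ⁻¹ i := Fin.ext rfl
      rw [he]
      exact σ.apply_symm_apply i
    · rintro ⟨a, rfl⟩
      rw [← hσ a, Equiv.Perm.inv_def, Equiv.symm_apply_apply]
      exact a.2
  ext i j
  rw [mul_permMat, permMat_mul_left]
  simp only [Bmat, Tmat, of_apply]
  refine if_congr (and_congr (key i) (key j)) ?_ ?_ <;>
    exact if_congr (EmbeddingLike.apply_eq_iff_eq _) rfl rfl

def genSet (n : ℕ) : Set (Matrix (Fin n) (Fin n) (ZMod 2)) :=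
  {P : Matrix (Fin n) (Fin n) (ZMod 2) |
      ∃ σ : Equiv.Perm (Fin n), P = Matrix.of fun i j => if σ j = i then 1 else 0} ∪
  {B : Matrix (Fin n) (Fin n) (ZMod 2) | 4 ≤ n ∧
      B = Matrix.of fun i j : Fin n =>
        if (i : ℕ) < 4 ∧ (j : ℕ) < 4 then (if i = j then 0 else 1)
        else (if i = j then 1 else 0)}

lemma permMat_mem (σ : Equiv.Perm (Fin n)) : permMat σ ∈ Submonoid.closure (genSet n) :=
  Submonoid.subset_closure (Or.inl ⟨σ, rfl⟩)

lemma Bmat_mem (h4 : 4 ≤ n) : Bmat n ∈ Submonoid.closure (genSet n) :=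
  Submonoid.subset_closure (Or.inr ⟨h4, rfl⟩)

lemma Tmat_mem (h4 : 4 ≤ n) (c : Fin 4 → Fin n) (hc : Function.Injective c) :
    Tmat c ∈ Submonoid.closure (genSet n) := by
  obtain ⟨σ, hσ⟩ := exists_perm h4 c hc
  rw [← Tmat_conj h4 c σ hσ]
  exact mul_mem (mul_mem (permMat_mem σ) (Bmat_mem h4)) (permMat_mem σ⁻¹)

lemma dot_eq (M : Matrix (Fin n) (Fin n) (ZMod 2)) (h : M * Mᵀ = 1) (i j : Fin n) :
    ∑ k, M i k * M j k = if i = j then 1 else 0 := by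
  have h' := congrFun (congrFun h i) j
  simpa [Matrix.mul_apply, Matrix.one_apply] using h'

lemma row_sum_one (M : Matrix (Fin n) (Fin n) (ZMod 2)) (h : M * Mᵀ = 1) (i : Fin n) :
    ∑ k, M i k = 1 := by
  have hd := dot_eq M h i i
  rw [if_pos rfl] at hd
  rw [← hd]
  exact Finset.sum_congr rfl fun k _ => (zmod2_mul_self _).symm

def supp (v : Fin n → ZMod 2) : Finset (Fin n) := Finset.univ.filter (fun j => v j = 1)

lemma mem_supp {v : Fin n → ZMod 2} {j : Fin n} : j ∈ supp v ↔ v j = 1 := by simp [supp]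

lemma sum_eq_card (v : Fin n → ZMod 2) : ∑ j, v j = ((supp v).card : ZMod 2) := by
  rw [← Finset.sum_filter_add_sum_filter_not Finset.univ (fun j => v j = 1)]
  have h2 : ∑ j ∈ Finset.univ.filter (fun j => ¬ v j = 1), v j = 0 :=
    Finset.sum_eq_zero fun j hj =>
      (zmod2_cases (v j)).resolve_right (Finset.mem_filter.mp hj).2
  rw [h2, add_zero,
    Finset.sum_congr rfl (fun j hj => (Finset.mem_filter.mp hj).2), Finset.sum_const, supp]
  simp [nsmul_eq_mul]

lemma card_supp_odd (M : Matrix (Fin n) (Fin n) (ZMod 2)) (h : M * Mᵀ = 1) (i : Fin n) :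
    (supp (M i)).card % 2 = 1 := by
  have h1 : (((supp (M i)).card : ℕ) : ZMod 2) = 1 := by
    rw [← sum_eq_card]; exact row_sum_one M h i
  have h2 := congrArg ZMod.val h1
  rw [ZMod.val_natCast] at h2
  exact h2.trans (by decide)

lemma orth_mul {M g : Matrix (Fin n) (Fin n) (ZMod 2)} (hM : M * Mᵀ = 1) (hg : g * gᵀ = 1) :
    (M * g) * (M * g)ᵀ = 1 := by
  rw [Matrix.transpose_mul, mul_assoc M g _, ← mul_assoc g gᵀ Mᵀ, hg, one_mul, hM]


lemma reduce (t : ℕ) : ∀ r : ℕ, r + t = n →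
    ∀ M : Matrix (Fin n) (Fin n) (ZMod 2), M * Mᵀ = 1 →
    (∀ i : Fin n, (i : ℕ) < r → ∀ j, M i j = if i = j then 1 else 0) →
    M ∈ Submonoid.closure (genSet n) := by
  induction t with
  | zero =>
    intro r hr M hM hred
    have hM1 : M = 1 := by
      ext i j
      rw [hred i (by have := i.isLt; omega) j, Matrix.one_apply]
    rw [hM1]; exact one_mem _
  | succ t ih =>
    intro r hr M₀ hM₀ hred₀
    have hrn : r < n := by omega
    suffices key : ∀ w : ℕ, ∀ M : Matrix (Fin n) (Fin n) (ZMod 2), M * Mᵀ = 1 →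
        (∀ i : Fin n, (i : ℕ) < r → ∀ j, M i j = if i = j then 1 else 0) →
        (supp (M ⟨r, hrn⟩)).card ≤ w → M ∈ Submonoid.closure (genSet n) by
      exact key _ M₀ hM₀ hred₀ le_rfl
    intro w
    induction w with
    | zero =>
      intro M hM hred hw
      have := card_supp_odd M hM ⟨r, hrn⟩
      omega
    | succ w ihw =>
      intro M hM hred hw
      set ri : Fin n := ⟨r, hrn⟩ with hridef
      have hriv : (ri : ℕ) = r := rfl
      have hlow : ∀ i : Fin n, r ≤ (i : ℕ) → ∀ j : Fin n, (j : ℕ) < r → M i j = 0 := by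
        intro i hi j hj
        have hne : i ≠ j := fun h => by
          rw [h] at hi; omega
        have hd := dot_eq M hM i j
        rw [if_neg hne] at hd
        have hs : ∑ k, M i k * M j k = M i j := by
          rw [Finset.sum_congr rfl (fun k _ => by rw [hred j hj k])]
          simp [mul_ite, Finset.sum_ite_eq]
        rwa [hs] at hd
      have hodd := card_supp_odd M hM ri
      rcases Nat.lt_or_ge (supp (M ri)).card 2 with hlt | hge
      · -- weight 1 : swap case
        have h1 : (supp (M ri)).card = 1 := by omega
        obtain ⟨cpos, hcpos⟩ := Finset.card_eq_one.mp h1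
        have hval : ∀ j, M ri j = if j = cpos then 1 else 0 := by
          intro j
          by_cases h : j = cpos
          · subst h; rw [if_pos rfl]
            exact mem_supp.mp (hcpos ▸ Finset.mem_singleton_self _)
          · rw [if_neg h]
            rcases zmod2_cases (M ri j) with h0 | h0
            · exact h0
            · exact absurd (Finset.mem_singleton.mp (hcpos ▸ mem_supp.mpr h0)) h
        have hrc : r ≤ (cpos : ℕ) := by
          by_contra hcl
          have h0 := hlow ri le_rfl cpos (by omega)
          rw [hval cpos, if_pos rfl] at h0
          exact one_ne_zero h0
        set σ := Equiv.swap ri cpos with hσdef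
        have hσsymm : ∀ u : Fin n, σ.symm u = σ u := by
          intro u; rw [hσdef, Equiv.symm_swap]
        have hM' : (M * permMat σ) * (M * permMat σ)ᵀ = 1 := orth_mul hM (permMat_orth σ)
        have hred' : ∀ i : Fin n, (i : ℕ) < r + 1 → ∀ j,
            (M * permMat σ) i j = if i = j then 1 else 0 := by
          intro i hi j
          rw [mul_permMat]
          rcases Nat.lt_or_ge (i : ℕ) r with hir | hir
          · have h1' : i ≠ ri := fun h => by rw [h] at hir; omega
            have h2' : i ≠ cpos := fun h => by rw [h] at hir; omega
            have hfix : σ i = i := Equiv.swap_apply_of_ne_of_ne h1' h2'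
            have hfix' : σ.symm i = i := by rw [hσsymm]; exact hfix
            rw [hred i hir (σ j)]
            refine if_congr ?_ rfl rfl
            constructor
            · intro h
              have h5 : σ.symm i = j := by rw [h, Equiv.symm_apply_apply]
              rw [← h5, hfix']
            · rintro rfl; exact hfix.symm
          · have h1' : i = ri := Fin.ext (by omega)
            rw [h1', hval (σ j)]
            refine if_congr ?_ rfl rfl
            constructor
            · intro h
              have h6 : j = ri := by
                rw [← Equiv.symm_apply_apply σ j, h, hσsymm, hσdef, Equiv.swap_apply_right]
              exact h6.symm
            · rintro rfl
              exact Equiv.swap_apply_left ri cpos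
        have hmem' := ih (r + 1) (by omega) (M * permMat σ) hM' hred'
        have hMeq : M = (M * permMat σ) * permMat σ⁻¹ := by
          rw [mul_assoc, permMat_mul_inv, mul_one]
        rw [hMeq]
        exact mul_mem hmem' (permMat_mem _)
      · -- weight ≥ 3 : Tmat case
        have h3 : 3 ≤ (supp (M ri)).card := by omega
        obtain ⟨s', hsub, hcard3⟩ := Finset.exists_subset_card_eq h3
        obtain ⟨x, y, z, hxy, hxz, hyz, rfl⟩ := Finset.card_eq_three.mp hcard3
        have hx : M ri x = 1 := mem_supp.mp (hsub (by simp))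
        have hy : M ri y = 1 := mem_supp.mp (hsub (by simp))
        have hz : M ri z = 1 := mem_supp.mp (hsub (by simp))
        have hxr : r ≤ (x : ℕ) := by
          by_contra hcl
          exact one_ne_zero (hx.symm.trans (hlow ri le_rfl x (by omega)))
        have hyr : r ≤ (y : ℕ) := by
          by_contra hcl
          exact one_ne_zero (hy.symm.trans (hlow ri le_rfl y (by omega)))
        have hzr : r ≤ (z : ℕ) := by
          by_contra hcl
          exact one_ne_zero (hz.symm.trans (hlow ri le_rfl z (by omega)))
        obtain ⟨p, hpr, hp0⟩ : ∃ p : Fin n, r ≤ (p : ℕ) ∧ M ri p = 0 := by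
          by_contra hcon
          push_neg at hcon
          have hall : ∀ k : Fin n, r ≤ (k : ℕ) → M ri k = 1 := fun k hk =>
            (zmod2_cases _).resolve_left (hcon k hk)
          obtain ⟨i2, hi2ne, hi2r⟩ : ∃ i2 : Fin n, i2 ≠ ri ∧ r ≤ (i2 : ℕ) := by
            by_cases hix : x = ri
            · exact ⟨y, fun h => hxy (hix.trans h.symm), hyr⟩
            · exact ⟨x, hix, hxr⟩
          have hd := dot_eq M hM ri i2
          rw [if_neg (fun h => hi2ne h.symm)] at hd
          have hstep : ∀ k : Fin n, M ri k * M i2 k = M i2 k := by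
            intro k
            rcases Nat.lt_or_ge (k : ℕ) r with hk | hk
            · rw [hlow i2 hi2r k hk, mul_zero]
            · rw [hall k hk, one_mul]
          rw [Finset.sum_congr rfl (fun k _ => hstep k), row_sum_one M hM i2] at hd
          exact one_ne_zero hd
        have hxp : x ≠ p := fun h => one_ne_zero ((h ▸ hx).symm.trans hp0).symm.symm
        have hyp : y ≠ p := fun h => one_ne_zero ((h ▸ hy).symm.trans hp0).symm.symm
        have hzp : z ≠ p := fun h => one_ne_zero ((h ▸ hz).symm.trans hp0).symm.symm
        set c : Fin 4 → Fin n := ![x, y, z, p] with hcdef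
        have hc0 : c 0 = x := rfl
        have hc1 : c 1 = y := rfl
        have hc2 : c 2 = z := rfl
        have hc3 : c 3 = p := rfl
        have hc : Function.Injective c := by
          have h01 : c 0 ≠ c 1 := by rw [hc0, hc1]; exact hxy
          have h02 : c 0 ≠ c 2 := by rw [hc0, hc2]; exact hxz
          have h03 : c 0 ≠ c 3 := by rw [hc0, hc3]; exact hxp
          have h12 : c 1 ≠ c 2 := by rw [hc1, hc2]; exact hyz
          have h13 : c 1 ≠ c 3 := by rw [hc1, hc3]; exact hyp
          have h23 : c 2 ≠ c 3 := by rw [hc2, hc3]; exact hzp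
          intro a b hab
          fin_cases a <;> fin_cases b <;>
            first
              | rfl
              | exact absurd hab h01 | exact absurd hab h01.symm
              | exact absurd hab h02 | exact absurd hab h02.symm
              | exact absurd hab h03 | exact absurd hab h03.symm
              | exact absurd hab h12 | exact absurd hab h12.symm
              | exact absurd hab h13 | exact absurd hab h13.symm
              | exact absurd hab h23 | exact absurd hab h23.symm
        have himg : ∀ j : Fin n, (∃ b, c b = j) ↔ (j = x ∨ j = y ∨ j = z ∨ j = p) := by
          intro j
          constructor
          · rintro ⟨⟨bv, hb⟩, rfl⟩
            interval_cases bv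
            · exact Or.inl rfl
            · exact Or.inr (Or.inl rfl)
            · exact Or.inr (Or.inr (Or.inl rfl))
            · exact Or.inr (Or.inr (Or.inr rfl))
          · rintro (rfl | rfl | rfl | rfl)
            exacts [⟨0, hc0⟩, ⟨1, hc1⟩, ⟨2, hc2⟩, ⟨3, hc3⟩]
        have h4 : 4 ≤ n := by
          have := Fintype.card_le_of_injective c hc
          simpa using this
        have hcr : ∀ a : Fin 4, r ≤ ((c a : Fin n) : ℕ) := by
          intro a
          fin_cases a
          · exact hxr
          · exact hyr
          · exact hzr
          · exact hpr
        have hsum_ri : ∑ a : Fin 4, M ri (c a) = 1 := by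
          rw [Fin.sum_univ_four, hc0, hc1, hc2, hc3, hx, hy, hz, hp0]
          decide
        have hM' : (M * Tmat c) * (M * Tmat c)ᵀ = 1 := by
          refine orth_mul hM ?_
          rw [Tmat_transpose]
          exact Tmat_sq c hc
        have hred' : ∀ i : Fin n, (i : ℕ) < r → ∀ j,
            (M * Tmat c) i j = if i = j then 1 else 0 := by
          intro i hi j
          rw [mul_Tmat c hc]
          by_cases hj : ∃ b, c b = j
          · rw [if_pos hj]
            have hzero : ∑ a, M i (c a) = 0 := Finset.sum_eq_zero fun a _ => by
              rw [hred i hi (c a),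
                if_neg (fun h => absurd (congrArg Fin.val h) (by have := hcr a; omega))]
            rw [hzero, add_zero, hred i hi j]
          · rw [if_neg hj]; exact hred i hi j
        have hv' : ∀ j, (M * Tmat c) ri j =
            if ∃ b, c b = j then M ri j + 1 else M ri j := by
          intro j
          rw [mul_Tmat c hc]
          by_cases hj : ∃ b, c b = j
          · rw [if_pos hj, if_pos hj, hsum_ri]
          · rw [if_neg hj, if_neg hj]
        have hsupp' : supp ((M * Tmat c) ri) = insert p (supp (M ri) \ {x, y, z}) := by
          ext j
          rw [mem_supp, hv']
          by_cases hj : ∃ b, c b = j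
          · rw [if_pos hj]
            have hne11 : (1 : ZMod 2) + 1 ≠ 1 := by decide
            rcases (himg j).mp hj with rfl | rfl | rfl | rfl
            · rw [hx]
              constructor
              · intro hcontr; exact absurd hcontr hne11
              · intro hmem
                exfalso
                rcases Finset.mem_insert.mp hmem with h | h
                · exact hxp h
                · exact (Finset.mem_sdiff.mp h).2 (by simp)
            · rw [hy]
              constructor
              · intro hcontr; exact absurd hcontr hne11
              · intro hmem
                exfalso
                rcases Finset.mem_insert.mp hmem with h | h
                · exact hyp h
                · exact (Finset.mem_sdiff.mp h).2 (by simp)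
            · rw [hz]
              constructor
              · intro hcontr; exact absurd hcontr hne11
              · intro hmem
                exfalso
                rcases Finset.mem_insert.mp hmem with h | h
                · exact hzp h
                · exact (Finset.mem_sdiff.mp h).2 (by simp)
            · rw [hp0]
              simp
          · rw [if_neg hj]
            have hjx : j ≠ x := fun h => hj ⟨0, hc0.trans h.symm⟩
            have hjy : j ≠ y := fun h => hj ⟨1, hc1.trans h.symm⟩
            have hjz : j ≠ z := fun h => hj ⟨2, hc2.trans h.symm⟩
            have hjp : j ≠ p := fun h => hj ⟨3, hc3.trans h.symm⟩
            simp only [Finset.mem_insert, Finset.mem_sdiff, mem_supp,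
              Finset.mem_singleton]
            constructor
            · intro h
              exact Or.inr ⟨h, by simp [hjx, hjy, hjz]⟩
            · rintro (rfl | ⟨h, -⟩)
              · exact (hjp rfl).elim
              · exact h
        have hcard' : (supp ((M * Tmat c) ri)).card ≤ w := by
          rw [hsupp']
          have hpns : p ∉ supp (M ri) \ {x, y, z} := fun h =>
            one_ne_zero ((mem_supp.mp (Finset.mem_sdiff.mp h).1).symm.trans hp0).symm.symm
          rw [Finset.card_insert_of_notMem hpns, Finset.card_sdiff_of_subset hsub]
          have hc3' : ({x, y, z} : Finset (Fin n)).card = 3 :=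
            Finset.card_eq_three.mpr ⟨x, y, z, hxy, hxz, hyz, rfl⟩
          rw [hc3']
          omega
        have hmem' := ihw (M * Tmat c) hM' hred' hcard'
        have hMeq : M = (M * Tmat c) * Tmat c := by
          rw [mul_assoc, Tmat_sq c hc, mul_one]
        rw [hMeq]
        exact mul_mem hmem' (Tmat_mem h4 c hc)

end OrthoGen

open OrthoGen in
/-- For `n ≥ 1`, the group `O(n, F₂)` is generated by the permutation matrices together with
(when `n ≥ 4`) the matrix `A ⊕ I_{n-4}`, where `A` is the 4×4 matrix with `0` on the diagonal
and `1` off the diagonal. -/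
theorem orthogonal_group_generators (n : ℕ) (hn : 1 ≤ n)
    (M : Matrix (Fin n) (Fin n) (ZMod 2)) :
    M * Mᵀ = 1 ↔
      M ∈ Submonoid.closure
        ({P : Matrix (Fin n) (Fin n) (ZMod 2) |
            ∃ σ : Equiv.Perm (Fin n), P = Matrix.of fun i j => if σ j = i then 1 else 0} ∪
         {B : Matrix (Fin n) (Fin n) (ZMod 2) | 4 ≤ n ∧
            B = Matrix.of fun i j : Fin n =>
              if (i : ℕ) < 4 ∧ (j : ℕ) < 4 then (if i = j then 0 else 1)
              else (if i = j then 1 else 0)}) := by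
  constructor
  · intro hM
    exact reduce n 0 (by omega) M hM (fun i hi j => absurd hi (by omega))
  · intro hmem
    let T : Submonoid (Matrix (Fin n) (Fin n) (ZMod 2)) :=
      { carrier := {A : Matrix (Fin n) (Fin n) (ZMod 2) | A * Aᵀ = 1}
        one_mem' := by simp
        mul_mem' := fun {a b} ha hb => orth_mul ha hb }
    have hsub : genSet n ⊆ ↑T := by
      rintro P (⟨σ, rfl⟩ | ⟨h4, rfl⟩)
      · exact permMat_orth σ
      · show Bmat n * (Bmat n)ᵀ = 1
        rw [Bmat_transpose]
        exact Bmat_sq h4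
    exact Submonoid.closure_le.mpr hsub hmem
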